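/- For every integer k with 0 ≤ k ≤ r, a subset Ψ ⊆ Φ is a k-step good root subsystem of Φ if and only if Ψ is a maximal closed root subsystem of Φ of rank r − k. -/

import Mathlib

open scoped Classical
noncomputable section

/-- A reduced crystallographic root system spanning `E`. -/
def IsRootSystem {E : Type*} [AddCommGroup E] [Module ℚ E] (Φ : Set E) : Prop :=
  Φ.Finite ∧ (0 : E) ∉ Φ ∧ Submodule.span ℚ Φ = ⊤ ∧ (∀ α ∈ Φ, -α ∈ Φ) ∧
    (∀ α ∈ Φ, ∃ f : E →ₗ[ℚ] ℚ, f α = 2 ∧ (∀ β ∈ Φ, ∃ n : ℤ, f β = (n : ℚ)) ∧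
      ∀ β ∈ Φ, β - f β • α ∈ Φ) ∧
    ∀ α ∈ Φ, ∀ c : ℚ, c • α ∈ Φ → c = 1 ∨ c = -1

/-- `Ψ` is a closed root subsystem of `Θ`. -/
def IsClosedSub {E : Type*} [AddCommGroup E] (Θ Ψ : Set E) : Prop :=
  Ψ ⊆ Θ ∧ (∀ l ∈ Ψ, -l ∈ Ψ) ∧ ∀ l ∈ Ψ, ∀ m ∈ Ψ, l + m ∈ Θ → l + m ∈ Ψ

/-- The rank of a subset: the dimension of its `ℚ`-linear span. -/
def rankOf {E : Type*} [AddCommGroup E] [Module ℚ E] (Ψ : Set E) : ℕ :=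
  Module.finrank ℚ (Submodule.span ℚ Ψ)

/-- `Ψ` is a maximal closed root subsystem of `Θ` of rank `m`. -/
def IsMaxClosedOfRank {E : Type*} [AddCommGroup E] [Module ℚ E] (Θ Ψ : Set E) (m : ℕ) : Prop :=
  IsClosedSub Θ Ψ ∧ rankOf Ψ = m ∧
    ∀ Ψ' : Set E, IsClosedSub Θ Ψ' → rankOf Ψ' = m → Ψ ⊆ Ψ' → Ψ' = Ψ

/-- A good root subsystem of `Θ`: a maximal closed root subsystem of rank `rank(Θ) − 1`. -/
def IsGoodSubOf {E : Type*} [AddCommGroup E] [Module ℚ E] (Θ Ψ : Set E) : Prop :=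
  IsMaxClosedOfRank Θ Ψ (rankOf Θ - 1)

/-- `k`-step good root subsystems of `Φ`, defined inductively: `Φ` itself is the unique
`0`-step good root subsystem, and a `(k+1)`-step good root subsystem is a good root
subsystem of some `k`-step good root subsystem. -/
def IsKStepGood {E : Type*} [AddCommGroup E] [Module ℚ E] (Φ : Set E) :
    ℕ → Set E → Prop
  | 0, Ψ => Ψ = Φ
  | k + 1, Ψ => ∃ Θ : Set E, IsKStepGood Φ k Θ ∧ IsGoodSubOf Θ Ψ

section Aux

variable {E : Type*} [AddCommGroup E] [Module ℚ E]

lemma closedSub_trans {Φ Θ Ψ : Set E} (h1 : IsClosedSub Φ Θ) (h2 : IsClosedSub Θ Ψ) :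
    IsClosedSub Φ Ψ :=
  ⟨h2.1.trans h1.1, h2.2.1, fun l hl m hm hF =>
    h2.2.2 l hl m hm (h1.2.2 l (h2.1 hl) m (h2.1 hm) hF)⟩

lemma closedSub_of_subset {Φ Θ Ψ : Set E} (h1 : IsClosedSub Φ Ψ) (hΘΦ : Θ ⊆ Φ)
    (hΨΘ : Ψ ⊆ Θ) : IsClosedSub Θ Ψ :=
  ⟨hΨΘ, h1.2.1, fun l hl m hm h => h1.2.2 l hl m hm (hΘΦ h)⟩

lemma closed_inter_span {Φ : Set E} (hneg : ∀ α ∈ Φ, -α ∈ Φ) (V : Submodule ℚ E) :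
    IsClosedSub Φ (Φ ∩ V) :=
  ⟨Set.inter_subset_left, fun l hl => ⟨hneg l hl.1, V.neg_mem hl.2⟩,
    fun l hl m hm h => ⟨h, V.add_mem hl.2 hm.2⟩⟩

/-- A maximal closed root subsystem of some given rank equals the intersection of `Φ`
with its span. -/
lemma max_inter_span {Φ Θ : Set E} [FiniteDimensional ℚ E] (hneg : ∀ α ∈ Φ, -α ∈ Φ)
    {n : ℕ} (hΘ : IsMaxClosedOfRank Φ Θ n) :
    Φ ∩ (Submodule.span ℚ Θ : Set E) = Θ := by
  have hsub : Θ ⊆ Φ ∩ (Submodule.span ℚ Θ : Set E) :=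
    fun x hx => ⟨hΘ.1.1 hx, Submodule.subset_span hx⟩
  have hspan : Submodule.span ℚ (Φ ∩ (Submodule.span ℚ Θ : Set E)) = Submodule.span ℚ Θ :=
    le_antisymm (Submodule.span_le.2 fun x hx => hx.2) (Submodule.span_mono hsub)
  exact hΘ.2.2 _ (closed_inter_span hneg _) (by rw [rankOf, hspan]; exact hΘ.2.1) hsub

end Aux

theorem statement9 {E : Type*} [AddCommGroup E] [Module ℚ E] [FiniteDimensional ℚ E]
    (hr : 1 ≤ Module.finrank ℚ E)
    (Φ : Set E) (hΦ : IsRootSystem Φ)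
    (k : ℕ) (hk : k ≤ Module.finrank ℚ E) (Ψ : Set E) :
    IsKStepGood Φ k Ψ ↔ IsMaxClosedOfRank Φ Ψ (Module.finrank ℚ E - k) := by
  set r := Module.finrank ℚ E with hrdef
  have hneg := hΦ.2.2.2.1
  have hΦclosed : IsClosedSub Φ Φ := ⟨subset_rfl, hneg, fun l _ m _ h => h⟩
  have hrankΦ : rankOf Φ = r := by rw [rankOf, hΦ.2.2.1, finrank_top]
  induction k generalizing Ψ with
  | zero =>
    simp only [IsKStepGood, Nat.sub_zero]
    constructor
    · rintro rfl
      exact ⟨hΦclosed, hrankΦ, fun Ψ' h _ hsub => subset_antisymm h.1 hsub⟩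
    · intro h
      exact (h.2.2 Φ hΦclosed hrankΦ h.1.1).symm
  | succ k ih =>
    have hk' : k ≤ r := Nat.le_of_succ_le hk
    constructor
    · rintro ⟨Θ, hΘk, hgood⟩
      have hΘ : IsMaxClosedOfRank Φ Θ (r - k) := (ih Θ hk').1 hΘk
      rw [IsGoodSubOf, hΘ.2.1] at hgood
      refine ⟨closedSub_trans hΘ.1 hgood.1, by rw [hgood.2.1]; omega, ?_⟩
      intro Ψ' hΨ'c hΨ'r hsub
      have hspan : Submodule.span ℚ Ψ = Submodule.span ℚ Ψ' := by
        apply Submodule.eq_of_le_of_finrank_eq (Submodule.span_mono hsub)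
        have h1 : rankOf Ψ = r - k - 1 := hgood.2.1
        have h2 : rankOf Ψ' = r - (k + 1) := hΨ'r
        rw [rankOf] at h1 h2
        omega
      have hΨ'Θ : Ψ' ⊆ Θ := by
        intro x hx
        have hxs : x ∈ Submodule.span ℚ Θ := by
          have : x ∈ Submodule.span ℚ Ψ := by rw [hspan]; exact Submodule.subset_span hx
          exact Submodule.span_mono hgood.1.1 this
        have : x ∈ Φ ∩ (Submodule.span ℚ Θ : Set E) := ⟨hΨ'c.1 hx, hxs⟩
        rwa [max_inter_span hneg hΘ] at this
      exact hgood.2.2 Ψ' (closedSub_of_subset hΨ'c hΘ.1.1 hΨ'Θ) (by rw [hΨ'r]; omega) hsub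
    · intro hΨ
      -- find a root outside the span of Ψ
      have hnotsub : ¬ Φ ⊆ (Submodule.span ℚ Ψ : Set E) := by
        intro h
        have htop : Submodule.span ℚ Ψ = ⊤ :=
          top_unique (hΦ.2.2.1 ▸ Submodule.span_le.2 h)
        have : rankOf Ψ = r := by rw [rankOf, htop, finrank_top]
        have h2 : rankOf Ψ = r - (k + 1) := hΨ.2.1
        omega
      obtain ⟨α, hαΦ, hαs⟩ := Set.not_subset.1 hnotsub
      have hα0 : α ≠ 0 := fun h => hΦ.2.1 (h ▸ hαΦ)
      set V := Submodule.span ℚ (insert α Ψ) with hV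
      set Θ0 : Set E := Φ ∩ (V : Set E) with hΘ0
      have hΘ0closed : IsClosedSub Φ Θ0 := closed_inter_span hneg V
      have hΨΘ0 : Ψ ⊆ Θ0 := fun x hx =>
        ⟨hΨ.1.1 hx, Submodule.subset_span (Set.mem_insert_of_mem _ hx)⟩
      have hαΘ0 : α ∈ Θ0 := ⟨hαΦ, Submodule.subset_span (Set.mem_insert _ _)⟩
      have hrΘ0 : rankOf Θ0 = r - k := by
        have hlt : Submodule.span ℚ Ψ < Submodule.span ℚ Θ0 :=
          lt_of_le_of_ne (Submodule.span_mono hΨΘ0)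
            (fun h => hαs (h ▸ Submodule.subset_span hαΘ0))
        have h1 : Module.finrank ℚ (Submodule.span ℚ Ψ) <
            Module.finrank ℚ (Submodule.span ℚ Θ0) :=
          Submodule.finrank_lt_finrank_of_lt hlt
        have h2 : Module.finrank ℚ (Submodule.span ℚ Θ0) ≤ Module.finrank ℚ V :=
          Submodule.finrank_mono (Submodule.span_le.2 fun x hx => hx.2)
        have h3 : Module.finrank ℚ V ≤ 1 + Module.finrank ℚ (Submodule.span ℚ Ψ) := by
          have := Submodule.finrank_sup_add_finrank_inf_eq
            (Submodule.span ℚ {α}) (Submodule.span ℚ Ψ)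
          rw [hV, Submodule.span_insert]
          have h4 : Module.finrank ℚ (Submodule.span ℚ {α}) = 1 := finrank_span_singleton hα0
          omega
        have h5 : rankOf Ψ = r - (k + 1) := hΨ.2.1
        rw [rankOf] at h5 ⊢
        omega
      -- choose a maximal closed subsystem of rank r - k containing Ψ
      set S : Set (Set E) := {Θ | IsClosedSub Φ Θ ∧ rankOf Θ = r - k ∧ Ψ ⊆ Θ} with hS
      have hSfin : S.Finite := hΦ.1.finite_subsets.subset fun Θ hΘ => hΘ.1.1
      obtain ⟨Θ, hΘS, hΘmax⟩ :=
        Set.Finite.exists_maximalFor id S hSfin ⟨Θ0, hΘ0closed, hrΘ0, hΨΘ0⟩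
      have hΘmaxc : IsMaxClosedOfRank Φ Θ (r - k) :=
        ⟨hΘS.1, hΘS.2.1, fun Θ' hc hrk hsub =>
          subset_antisymm (hΘmax (j := Θ') ⟨hc, hrk, hΘS.2.2.trans hsub⟩ hsub) hsub⟩
      refine ⟨Θ, (ih Θ hk').2 hΘmaxc, ?_⟩
      rw [IsGoodSubOf, hΘS.2.1]
      refine ⟨closedSub_of_subset hΨ.1 hΘS.1.1 hΘS.2.2, by rw [hΨ.2.1]; omega, ?_⟩
      intro Ψ'' hc hrk hsub
      exact hΨ.2.2 Ψ'' (closedSub_trans hΘS.1 hc) (by rw [hrk]; omega) hsub
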